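/- Every connected subspace of a space that is both strongly connected and essentially connected is itself both strongly connected and essentially connected. -/

import Mathlib

open TopologicalSpace Set

section Ext

variable {X : Type*} (τ : TopologicalSpace X) (Y : Set X) (u : TopologicalSpace Y)

/-- The generators of the extension of a topology `u` on a subset `Y` of `(X, τ)`
to the whole of `X`. -/
def extGen : Set (Set X) :=
  {A | τ.IsOpen A} ∪
    {A | ∃ U : Set Y, u.IsOpen U ∧ A = (Subtype.val '' U) ∪ (@closure X τ Y)ᶜ}

/-- The extension of a topology `u` on a subset `Y` of `(X, τ)` to the whole of `X`. -/
def extTop : TopologicalSpace X := generateFrom (extGen τ Y u)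

lemma extTop_le : extTop τ Y u ≤ τ := by
  have h : extTop τ Y u ≤ generateFrom {A | τ.IsOpen A} :=
    generateFrom_anti (subset_union_left)
  exact le_trans h (le_of_eq (generateFrom_setOf_isOpen τ))

lemma preimage_gen {U : Set Y} :
    (Subtype.val ⁻¹' ((Subtype.val '' U) ∪ (@closure X τ Y)ᶜ) : Set Y) = U := by
  ext y
  simp only [mem_preimage, mem_union, mem_image, mem_compl_iff]
  constructor
  · rintro (⟨z, hz, hzy⟩ | h)
    · rwa [Subtype.val_injective hzy] at hz
    · exact absurd (@subset_closure X τ Y y.1 y.2) h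
  · intro h; exact Or.inl ⟨y, h, rfl⟩

lemma induced_extTop (hu : u ≤ τ.induced Subtype.val) :
    (extTop τ Y u).induced Subtype.val = u := by
  apply le_antisymm
  · -- every u-open set is induced-open
    intro U hU
    exact ⟨(Subtype.val '' U) ∪ (@closure X τ Y)ᶜ,
      TopologicalSpace.GenerateOpen.basic _ (Or.inr ⟨U, hU, rfl⟩), preimage_gen τ Y⟩
  · -- every induced-open set is u-open
    rintro V ⟨A, hA, rfl⟩
    induction hA with
    | @basic B hB =>
      rcases hB with hB | ⟨U, hU, rfl⟩
      · exact hu _ ⟨B, hB, rfl⟩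
      · rw [preimage_gen τ Y]; exact hU
    | univ => exact u.isOpen_univ
    | inter B C _ _ ihB ihC => rw [preimage_inter]; exact u.isOpen_inter _ _ ihB ihC
    | sUnion S _ ih =>
      have hrw : (Subtype.val ⁻¹' ⋃₀ S : Set Y) = ⋃₀ ((fun A => Subtype.val ⁻¹' A) '' S) := by
        rw [sUnion_image, preimage_sUnion]
      rw [hrw]
      exact u.isOpen_sUnion _ (by rintro V ⟨B, hBS, rfl⟩; exact ih B hBS)

/-- Basic neighbourhood structure of the extension topology. -/
lemma extTop_basic_nhds {A : Set X} (hA : (extTop τ Y u).IsOpen A) :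
    ∀ x ∈ A, ∃ W, τ.IsOpen W ∧ x ∈ W ∧
      (W ⊆ A ∨ ∃ U : Set Y, u.IsOpen U ∧ x ∈ (Subtype.val '' U) ∪ (@closure X τ Y)ᶜ ∧
        W ∩ ((Subtype.val '' U) ∪ (@closure X τ Y)ᶜ) ⊆ A) := by
  induction hA with
  | @basic B hB =>
    intro x hx
    rcases hB with hB | ⟨U, hU, rfl⟩
    · exact ⟨B, hB, hx, Or.inl subset_rfl⟩
    · exact ⟨univ, τ.isOpen_univ, trivial, Or.inr ⟨U, hU, hx, by simp⟩⟩
  | univ => exact fun x _ => ⟨univ, τ.isOpen_univ, trivial, Or.inl subset_rfl⟩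
  | inter B C hBo hCo ihB ihC =>
    intro x hx
    obtain ⟨W₁, hW₁, hxW₁, h₁⟩ := ihB x hx.1
    obtain ⟨W₂, hW₂, hxW₂, h₂⟩ := ihC x hx.2
    refine ⟨W₁ ∩ W₂, τ.isOpen_inter _ _ hW₁ hW₂, ⟨hxW₁, hxW₂⟩, ?_⟩
    rcases h₁ with h₁ | ⟨U₁, hU₁, hxU₁, hs₁⟩
    · rcases h₂ with h₂ | ⟨U₂, hU₂, hxU₂, hs₂⟩
      · exact Or.inl fun y hy => ⟨h₁ hy.1, h₂ hy.2⟩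
      · exact Or.inr ⟨U₂, hU₂, hxU₂, fun y hy =>
          ⟨h₁ hy.1.1, hs₂ ⟨hy.1.2, hy.2⟩⟩⟩
    · rcases h₂ with h₂ | ⟨U₂, hU₂, hxU₂, hs₂⟩
      · exact Or.inr ⟨U₁, hU₁, hxU₁, fun y hy => ⟨hs₁ ⟨hy.1.1, hy.2⟩, h₂ hy.1.2⟩⟩
      · refine Or.inr ⟨U₁ ∩ U₂, u.isOpen_inter _ _ hU₁ hU₂, ?_, ?_⟩
        · rcases hxU₁ with ⟨y, hy, rfl⟩ | hK₁
          · rcases hxU₂ with ⟨z, hz, hzy⟩ | hK₂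
            · exact Or.inl ⟨y, ⟨hy, by rwa [Subtype.val_injective hzy] at hz⟩, rfl⟩
            · exact Or.inr hK₂
          · exact Or.inr hK₁
        · intro y hy
          rcases hy.2 with ⟨z, hz, rfl⟩ | h
          · exact ⟨hs₁ ⟨hy.1.1, Or.inl ⟨z, hz.1, rfl⟩⟩, hs₂ ⟨hy.1.2, Or.inl ⟨z, hz.2, rfl⟩⟩⟩
          · exact ⟨hs₁ ⟨hy.1.1, Or.inr h⟩, hs₂ ⟨hy.1.2, Or.inr h⟩⟩
  | sUnion S hS ih =>
    intro x hx
    obtain ⟨A, hAS, hxA⟩ := hx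
    obtain ⟨W, hW, hxW, h⟩ := ih A hAS x hxA
    refine ⟨W, hW, hxW, ?_⟩
    rcases h with h | ⟨U, hU, hxU, hs⟩
    · exact Or.inl fun y hy => ⟨A, hAS, h hy⟩
    · exact Or.inr ⟨U, hU, hxU, fun y hy => ⟨A, hAS, hs hy⟩⟩

end Ext

section Conn

variable {X : Type*} {τ : TopologicalSpace X} {Y : Set X} {u : TopologicalSpace Y}

lemma mem_closure_iff' {Z : Type*} (σ : TopologicalSpace Z) {s : Set Z} {a : Z} :
    a ∈ @closure Z σ s ↔ ∀ o, σ.IsOpen o → a ∈ o → (o ∩ s).Nonempty := by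
  letI := σ; exact mem_closure_iff

lemma isOpen_iff' {Z : Type*} (σ : TopologicalSpace Z) {s : Set Z} :
    σ.IsOpen s ↔ ∀ x ∈ s, ∃ t, t ⊆ s ∧ σ.IsOpen t ∧ x ∈ t := by
  letI := σ; exact isOpen_iff_forall_mem_open

lemma isOpen_compl_closure' {Z : Type*} (σ : TopologicalSpace Z) (s : Set Z) :
    σ.IsOpen (@closure Z σ s)ᶜ := by
  letI := σ; exact isClosed_closure.isOpen_compl

lemma extTop_sep_false (hτc : @ConnectedSpace X τ) (hYne : Y.Nonempty)
    {U V : Set X} (hU : (extTop τ Y u).IsOpen U) (hV : (extTop τ Y u).IsOpen V)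
    (hcover : univ ⊆ U ∪ V) (hdisj : ∀ a, a ∈ U → a ∈ V → False)
    (hVY : ∀ a, a ∈ V → a ∈ Y → False) (hVne : V.Nonempty) :
    False := by
  -- step 1 : V misses the closure of Y
  have step1 : ∀ a, a ∈ V → a ∈ @closure X τ Y → False := by
    intro x hxV hxcl
    obtain ⟨W, hW, hxW, hc⟩ := extTop_basic_nhds τ Y u hV x hxV
    rcases hc with hc | ⟨U₀, _, hxU₀, _⟩
    · obtain ⟨y, hyW, hyY⟩ := (mem_closure_iff' τ).mp hxcl W hW hxW
      exact hVY y (hc hyW) hyY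
    · rcases hxU₀ with ⟨z, _, rfl⟩ | hK
      · exact hVY _ hxV z.2
      · exact hK hxcl
  have hclU : @closure X τ Y ⊆ U := by
    intro x hx
    rcases hcover (mem_univ x) with h | h
    · exact h
    · exact absurd hx (fun hc => step1 x h hc)
  -- step 2 : the closure of Y misses the closure of V
  have step2 : ∀ x ∈ @closure X τ Y, x ∉ @closure X τ V := by
    intro x hx hxV
    obtain ⟨W, hW, hxW, hc⟩ := extTop_basic_nhds τ Y u hU x (hclU hx)
    obtain ⟨y, hyW, hyV⟩ := (mem_closure_iff' τ).mp hxV W hW hxW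
    have hyK : y ∈ (@closure X τ Y)ᶜ := fun hycl => step1 y hyV hycl
    rcases hc with hc | ⟨U₀, _, _, hs⟩
    · exact hdisj y (hc hyW) hyV
    · exact hdisj y (hs ⟨hyW, Or.inr hyK⟩) hyV
  -- step 3 : V is τ-open
  have hVopen : τ.IsOpen V := by
    rw [isOpen_iff' τ]
    intro x hxV
    obtain ⟨W, hW, hxW, hc⟩ := extTop_basic_nhds τ Y u hV x hxV
    rcases hc with hc | ⟨U₀, _, hxU₀, hs⟩
    · exact ⟨W, hc, hW, hxW⟩
    · have hxK : x ∈ (@closure X τ Y)ᶜ := by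
        rcases hxU₀ with ⟨z, _, rfl⟩ | hK
        · exact absurd z.2 (fun h => hVY _ hxV h)
        · exact hK
      exact ⟨W ∩ (@closure X τ Y)ᶜ, fun y hy => hs ⟨hy.1, Or.inr hy.2⟩,
        τ.isOpen_inter _ _ hW (isOpen_compl_closure' τ Y), ⟨hxW, hxK⟩⟩
  -- step 4 : U is τ-open
  have hUopen : τ.IsOpen U := by
    rw [isOpen_iff' τ]
    intro x hxU
    by_cases hx : x ∈ @closure X τ Y
    · have hnc := step2 x hx
      rw [mem_closure_iff' τ] at hnc
      push_neg at hnc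
      obtain ⟨W, hW, hxW, hWV⟩ := hnc
      refine ⟨W, fun y hy => ?_, hW, hxW⟩
      rcases hcover (mem_univ y) with h | h
      · exact h
      · exact (Set.eq_empty_iff_forall_notMem.mp hWV y ⟨hy, h⟩).elim
    · obtain ⟨W, hW, hxW, hc⟩ := extTop_basic_nhds τ Y u hU x hxU
      rcases hc with hc | ⟨U₀, _, _, hs⟩
      · exact ⟨W, hc, hW, hxW⟩
      · exact ⟨W ∩ (@closure X τ Y)ᶜ, fun y hy => hs ⟨hy.1, Or.inr hy.2⟩,
          τ.isOpen_inter _ _ hW (isOpen_compl_closure' τ Y), ⟨hxW, hx⟩⟩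
  -- contradiction with connectedness of τ
  obtain ⟨y₀, hy₀⟩ := hYne
  have hpre : @IsPreconnected X τ univ :=
    @PreconnectedSpace.isPreconnected_univ X τ hτc.toPreconnectedSpace
  obtain ⟨z, -, hzU, hzV⟩ := hpre U V hUopen hVopen hcover
    ⟨y₀, mem_univ _, hclU (@subset_closure X τ Y y₀ hy₀)⟩
    ⟨hVne.choose, mem_univ _, hVne.choose_spec⟩
  exact hdisj z hzU hzV

lemma extTop_connectedSpace (hτc : @ConnectedSpace X τ) (huc : @ConnectedSpace Y u)
    (hu : u ≤ τ.induced Subtype.val) : @ConnectedSpace X (extTop τ Y u) := by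
  have hXne : Nonempty X := hτc.toNonempty
  have hYne : Y.Nonempty := by
    obtain ⟨y⟩ := huc.toNonempty; exact ⟨y.1, y.2⟩
  refine @ConnectedSpace.mk X (extTop τ Y u) (@PreconnectedSpace.mk X (extTop τ Y u) ?_) hXne
  intro U V hU hV hcover hUne hVne
  by_contra hcon
  rw [not_nonempty_iff_eq_empty] at hcon
  have hdisj : ∀ a, a ∈ U → a ∈ V → False := fun a h1 h2 =>
    Set.eq_empty_iff_forall_notMem.mp hcon a ⟨mem_univ a, h1, h2⟩
  -- Y is preconnected in the extension topology
  have hcont : @Continuous Y X u (extTop τ Y u) Subtype.val := by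
    rw [continuous_iff_le_induced, induced_extTop τ Y u hu]
  have hYconn : @IsConnected X (extTop τ Y u) Y := by
    have := @isConnected_range Y X u (extTop τ Y u) huc Subtype.val hcont
    rwa [Subtype.range_val] at this
  have hYcov : Y ⊆ U ∪ V := fun y _ => hcover (mem_univ y)
  by_cases hYV : (Y ∩ V).Nonempty
  · by_cases hYU : (Y ∩ U).Nonempty
    · obtain ⟨z, _, hzU, hzV⟩ := hYconn.2 U V hU hV hYcov hYU hYV
      exact hdisj z hzU hzV
    · rw [not_nonempty_iff_eq_empty] at hYU
      exact extTop_sep_false hτc hYne hV hU (by rwa [union_comm])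
        (fun a h1 h2 => hdisj a h2 h1)
        (fun a h1 h2 => Set.eq_empty_iff_forall_notMem.mp hYU a ⟨h2, h1⟩)
        (hUne.imp (fun a h => h.2))
  · rw [not_nonempty_iff_eq_empty] at hYV
    exact extTop_sep_false hτc hYne hU hV hcover hdisj
      (fun a h1 h2 => Set.eq_empty_iff_forall_notMem.mp hYV a ⟨h2, h1⟩)
      (hVne.imp (fun a h => h.2))

end Conn

lemma isConnected_image_val {X : Type*} {Y : Set X} {r : TopologicalSpace X}
    {u : TopologicalSpace Y} (h : r.induced Subtype.val = u) (C : Set Y) :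
    @IsConnected X r (Subtype.val '' C) ↔ @IsConnected Y u C := by
  have hind : @Topology.IsInducing Y X u r Subtype.val := ⟨h.symm⟩
  have himg : @IsPreconnected X r (Subtype.val '' C) ↔ @IsPreconnected Y u C := by
    letI := u; letI := r
    exact hind.isPreconnected_image
  constructor
  · rintro ⟨hne, hpre⟩
    refine ⟨?_, himg.mp hpre⟩
    rcases hne with ⟨x, ⟨y, hy, rfl⟩⟩
    exact ⟨y, hy⟩
  · rintro ⟨hne, hpre⟩
    exact ⟨hne.image _, himg.mpr hpre⟩

/-- A topology is maximal connected if it is connected and no strictly finer topology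
is connected. -/
def MaximalConnected {X : Type*} (t : TopologicalSpace X) : Prop :=
  @ConnectedSpace X t ∧ ∀ s : TopologicalSpace X, s < t → ¬ @ConnectedSpace X s

/-- A topology is strongly connected if it admits a maximal connected expansion. -/
def StronglyConnected {X : Type*} (t : TopologicalSpace X) : Prop :=
  ∃ s : TopologicalSpace X, s ≤ t ∧ MaximalConnected s

/-- A topology is essentially connected if it is connected and every connected expansion
has the same connected subsets. -/
def EssentiallyConnected {X : Type*} (t : TopologicalSpace X) : Prop :=
  @ConnectedSpace X t ∧ ∀ s : TopologicalSpace X, s ≤ t → @ConnectedSpace X s →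
    ∀ C : Set X, @IsConnected X s C ↔ @IsConnected X t C

/-- every connected subspace of a strongly connected and essentially
connected space is both strongly connected and essentially connected. -/
theorem stmt_9 {X : Type*} [t : TopologicalSpace X]
    (h1 : StronglyConnected t) (h2 : EssentiallyConnected t)
    (Y : Set X) (hY : ConnectedSpace Y) :
    StronglyConnected (TopologicalSpace.induced (fun y : Y => (y : X)) t) ∧
    EssentiallyConnected (TopologicalSpace.induced (fun y : Y => (y : X)) t) := by
  obtain ⟨s, hst, hsc, hsmax⟩ := h1
  have hYt_set : @IsConnected X t Y := (@isConnected_iff_connectedSpace X t Y).mpr hY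
  have hYs_set : @IsConnected X s Y := (h2.2 s hst hsc Y).mpr hYt_set
  have hYs : @ConnectedSpace Y (s.induced Subtype.val) :=
    (@isConnected_iff_connectedSpace X s Y).mp hYs_set
  constructor
  · refine ⟨s.induced Subtype.val, induced_mono hst, hYs, ?_⟩
    intro u hu huc
    have hle : u ≤ s.induced Subtype.val := le_of_lt hu
    have hind := induced_extTop s Y u hle
    have hlt : extTop s Y u < s := by
      refine lt_of_le_of_ne (extTop_le s Y u) ?_
      intro h
      rw [h] at hind
      exact absurd hind.symm (ne_of_lt hu)
    exact hsmax _ hlt (extTop_connectedSpace hsc huc hle)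
  · refine ⟨hY, ?_⟩
    intro u hu huc C
    have hind := induced_extTop t Y u hu
    have key := h2.2 (extTop t Y u) (extTop_le t Y u) (extTop_connectedSpace h2.1 huc hu)
      (Subtype.val '' C)
    have hiff1 := isConnected_image_val hind C
    have hiff2 := isConnected_image_val (rfl : t.induced Subtype.val = t.induced Subtype.val) C
    exact hiff1.symm.trans (key.trans hiff2)
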